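/- Let A ∈ ℝ^{n×m}, let τ > 0, and define the double-softmax fixed-point map T : ℝᵐ → ℝᵐ by T(y) = σ_{1/τ}(Aᵀ σ_{1/τ}(−A y)), where σ_{1/τ} denotes softmax with inverse temperature 1/τ (applied in ℝⁿ and ℝᵐ respectively). Then for every 1 ≤ p ≤ ∞ and all y₁, y₂ ∈ ℝᵐ, ‖T(y₁) − T(y₂)‖_p ≤ (‖Aᵀ‖_p ‖A‖_p / (4τ²)) ‖y₁ − y₂‖_p, where ‖A‖_p denotes the ℓ_p-induced operator norm. In particular, in the ℓ₂ norm, T is Lipschitz with constant ‖A‖₂² / (4τ²). -/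

import Mathlib

open scoped ENNReal BigOperators

/-- The softmax function with inverse temperature `lam`. -/
noncomputable def softmax {n : ℕ} (lam : ℝ) (x : Fin n → ℝ) : Fin n → ℝ :=
  fun i => Real.exp (lam * x i) / ∑ j, Real.exp (lam * x j)

/-- The ℓ_p norm on `Fin n → ℝ`, for `p ∈ [1, ∞]`. -/
noncomputable def lpNorm {n : ℕ} (p : ℝ≥0∞) (x : Fin n → ℝ) : ℝ :=
  if p = ⊤ then ⨆ i, |x i| else (∑ i, |x i| ^ p.toReal) ^ (1 / p.toReal)

/-- The ℓ_p-induced operator norm of a matrix. -/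
noncomputable def opNorm {n m : ℕ} (p : ℝ≥0∞) (A : Matrix (Fin n) (Fin m) ℝ) : ℝ :=
  ⨆ v : {v : Fin m → ℝ // v ≠ 0}, lpNorm p (A.mulVec v.val) / lpNorm p v.val

/-- The matrix `Diag(s) - s sᵀ` (Jacobian of softmax with `lam = 1` at a point with value `s`). -/
noncomputable def softmaxJac {n : ℕ} (s : Fin n → ℝ) : Matrix (Fin n) (Fin n) ℝ :=
  Matrix.diagonal s - Matrix.vecMulVec s s

/-- The open (interior of the) probability simplex. -/
def openSimplex (n : ℕ) : Set (Fin n → ℝ) :=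
  {u | (∀ i, 0 < u i) ∧ ∑ i, u i = 1}

/-- The (closed) probability simplex. -/
def probSimplex (n : ℕ) : Set (Fin n → ℝ) :=
  {u | (∀ i, 0 ≤ u i) ∧ ∑ i, u i = 1}

lemma lpNorm_eq_norm {n : ℕ} (p : ℝ≥0∞) [Fact (1 ≤ p)] (x : Fin n → ℝ) :
    lpNorm p x = ‖(WithLp.equiv p (∀ _ : Fin n, ℝ)).symm x‖ := by
  rcases eq_or_ne p ⊤ with rfl | hp
  · rw [lpNorm, if_pos rfl, PiLp.norm_eq_ciSup]
    simp [Real.norm_eq_abs]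
  · have h1 : (1 : ℝ≥0∞) ≤ p := Fact.out
    have hp0 : 0 < p.toReal := ENNReal.toReal_pos (lt_of_lt_of_le zero_lt_one h1).ne' hp
    rw [lpNorm, if_neg hp, PiLp.norm_eq_sum hp0]
    simp [Real.norm_eq_abs]

lemma lpNorm_nonneg {n : ℕ} (p : ℝ≥0∞) [Fact (1 ≤ p)] (x : Fin n → ℝ) : 0 ≤ lpNorm p x := by
  rw [lpNorm_eq_norm]; exact norm_nonneg _

lemma lpNorm_smul {n : ℕ} (p : ℝ≥0∞) [Fact (1 ≤ p)] (c : ℝ) (x : Fin n → ℝ) :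
    lpNorm p (c • x) = |c| * lpNorm p x := by
  rw [lpNorm_eq_norm, lpNorm_eq_norm, WithLp.equiv_symm_apply, WithLp.toLp_smul, norm_smul, Real.norm_eq_abs]

lemma lpNorm_neg {n : ℕ} (p : ℝ≥0∞) [Fact (1 ≤ p)] (x : Fin n → ℝ) :
    lpNorm p (-x) = lpNorm p x := by
  rw [lpNorm_eq_norm, lpNorm_eq_norm, WithLp.equiv_symm_apply, WithLp.toLp_neg, norm_neg]

noncomputable def matCLM {n m : ℕ} (p : ℝ≥0∞) [Fact (1 ≤ p)] (A : Matrix (Fin n) (Fin m) ℝ) :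
    PiLp p (fun _ : Fin m => ℝ) →L[ℝ] PiLp p (fun _ : Fin n => ℝ) :=
  LinearMap.toContinuousLinearMap <|
    (((WithLp.linearEquiv p ℝ (∀ _ : Fin n, ℝ)).symm.toLinearMap.comp A.mulVecLin).comp
      (WithLp.linearEquiv p ℝ (∀ _ : Fin m, ℝ)).toLinearMap)

lemma matCLM_apply {n m : ℕ} (p : ℝ≥0∞) [Fact (1 ≤ p)] (A : Matrix (Fin n) (Fin m) ℝ)
    (v : Fin m → ℝ) :
    matCLM p A ((WithLp.equiv p (∀ _ : Fin m, ℝ)).symm v) =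
      (WithLp.equiv p (∀ _ : Fin n, ℝ)).symm (A.mulVec v) := rfl

lemma ratio_le_norm_matCLM {n m : ℕ} (p : ℝ≥0∞) [Fact (1 ≤ p)] (A : Matrix (Fin n) (Fin m) ℝ)
    (v : Fin m → ℝ) (hv : v ≠ 0) :
    lpNorm p (A.mulVec v) / lpNorm p v ≤ ‖matCLM p A‖ := by
  have hv' : (WithLp.equiv p (∀ _ : Fin m, ℝ)).symm v ≠ 0 := by
    intro h
    exact hv (by simpa using congrArg (WithLp.equiv p (∀ _ : Fin m, ℝ)) h)
  rw [lpNorm_eq_norm, lpNorm_eq_norm, div_le_iff₀ (norm_pos_iff.2 hv')]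
  rw [← matCLM_apply p A v]
  exact (matCLM p A).le_opNorm _

lemma opNorm_nonneg' {n m : ℕ} (p : ℝ≥0∞) [Fact (1 ≤ p)] (A : Matrix (Fin n) (Fin m) ℝ) :
    0 ≤ opNorm p A :=
  Real.iSup_nonneg fun _ => div_nonneg (lpNorm_nonneg _ _) (lpNorm_nonneg _ _)

lemma lpNorm_pos {n : ℕ} (p : ℝ≥0∞) [Fact (1 ≤ p)] {v : Fin n → ℝ} (hv : v ≠ 0) :
    0 < lpNorm p v := by
  rw [lpNorm_eq_norm]
  refine norm_pos_iff.2 fun h => hv ?_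
  simpa using congrArg (WithLp.equiv p (∀ _ : Fin n, ℝ)) h

lemma lpNorm_mulVec_le {n m : ℕ} (p : ℝ≥0∞) [Fact (1 ≤ p)] (A : Matrix (Fin n) (Fin m) ℝ)
    (v : Fin m → ℝ) :
    lpNorm p (A.mulVec v) ≤ opNorm p A * lpNorm p v := by
  rcases eq_or_ne v 0 with rfl | hv
  · simp only [Matrix.mulVec_zero]
    have h0 : lpNorm p (0 : Fin n → ℝ) = 0 := by
      rw [lpNorm_eq_norm]; simp
    have h0' : lpNorm p (0 : Fin m → ℝ) = 0 := by
      rw [lpNorm_eq_norm]; simp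
    rw [h0, h0', mul_zero]
  · have hb : BddAbove (Set.range fun w : {w : Fin m → ℝ // w ≠ 0} =>
        lpNorm p (A.mulVec w.1) / lpNorm p w.1) := by
      refine ⟨‖matCLM p A‖, ?_⟩
      rintro _ ⟨⟨w, hw⟩, rfl⟩
      exact ratio_le_norm_matCLM p A w hw
    have h := le_ciSup hb ⟨v, hv⟩
    rw [div_le_iff₀ (lpNorm_pos p hv)] at h
    exact h

lemma opNorm_eq_norm_matCLM {n m : ℕ} (p : ℝ≥0∞) [Fact (1 ≤ p)] (A : Matrix (Fin n) (Fin m) ℝ) :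
    opNorm p A = ‖matCLM p A‖ := by
  apply le_antisymm
  · exact Real.iSup_le (fun v => ratio_le_norm_matCLM p A v.1 v.2) (norm_nonneg _)
  · refine ContinuousLinearMap.opNorm_le_bound _ (opNorm_nonneg' p A) fun w => ?_
    set v := WithLp.equiv p (∀ _ : Fin m, ℝ) w with hvdef
    have h1 : ‖matCLM p A w‖ = lpNorm p (A.mulVec v) := by
      rw [lpNorm_eq_norm]; rfl
    have h2 : ‖w‖ = lpNorm p v := by rw [lpNorm_eq_norm]; rfl
    rw [h1, h2]
    exact lpNorm_mulVec_le p A v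

open scoped Matrix.Norms.L2Operator in
lemma opNorm_two_transpose {n m : ℕ} (A : Matrix (Fin n) (Fin m) ℝ) :
    opNorm 2 A.transpose = opNorm 2 A := by
  haveI : Fact ((1 : ℝ≥0∞) ≤ 2) := ⟨one_le_two⟩
  have key : ∀ (k l : ℕ) (B : Matrix (Fin k) (Fin l) ℝ), opNorm 2 B = ‖B‖ := by
    intro k l B
    rw [opNorm_eq_norm_matCLM, Matrix.l2_opNorm_def]
    congr 1
  rw [key, key]
  have hA : A.transpose = A.conjTranspose := by
    ext i j; simp [Matrix.conjTranspose_apply]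
  rw [hA, Matrix.l2_opNorm_conjTranspose]

lemma softmaxJac_symm {k : ℕ} (s : Fin k → ℝ) (i j : Fin k) :
    softmaxJac s i j = softmaxJac s j i := by
  rcases eq_or_ne i j with rfl | hij
  · rfl
  · simp [softmaxJac, Matrix.diagonal_apply_ne _ hij, Matrix.diagonal_apply_ne _ hij.symm,
      Matrix.vecMulVec_apply, mul_comm]

lemma jac_row_sum_le {k : ℕ} {s : Fin k → ℝ} (h0 : ∀ i, 0 ≤ s i) (h1 : ∑ i, s i ≤ 1)
    (i : Fin k) : ∑ j, |softmaxJac s i j| ≤ 1 / 2 := by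
  have hsi1 : s i ≤ 1 :=
    le_trans (Finset.single_le_sum (fun j _ => h0 j) (Finset.mem_univ i)) h1
  have hdiag : |softmaxJac s i i| = s i * (1 - s i) := by
    have : softmaxJac s i i = s i * (1 - s i) := by
      simp [softmaxJac, Matrix.vecMulVec_apply]; ring
    rw [this, abs_of_nonneg (mul_nonneg (h0 i) (by linarith))]
  have hoff : ∀ j, j ≠ i → |softmaxJac s i j| = s i * s j := by
    intro j hj
    have : softmaxJac s i j = -(s i * s j) := by
      simp [softmaxJac, Matrix.diagonal_apply_ne _ (Ne.symm hj), Matrix.vecMulVec_apply]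
    rw [this, abs_neg, abs_of_nonneg (mul_nonneg (h0 i) (h0 j))]
  rw [← Finset.sum_erase_add _ _ (Finset.mem_univ i), hdiag]
  have herase : ∑ j ∈ Finset.univ.erase i, |softmaxJac s i j| = s i * ∑ j ∈ Finset.univ.erase i, s j := by
    rw [Finset.mul_sum]
    exact Finset.sum_congr rfl fun j hj => hoff j (Finset.ne_of_mem_erase hj)
  have hsum_erase : ∑ j ∈ Finset.univ.erase i, s j ≤ 1 - s i := by
    have := Finset.sum_erase_add Finset.univ s (Finset.mem_univ i)
    linarith
  have h2 : s i * ∑ j ∈ Finset.univ.erase i, s j ≤ s i * (1 - s i) :=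
    mul_le_mul_of_nonneg_left hsum_erase (h0 i)
  rw [herase]
  nlinarith [sq_nonneg (2 * s i - 1)]

lemma jac_col_sum_le {k : ℕ} {s : Fin k → ℝ} (h0 : ∀ i, 0 ≤ s i) (h1 : ∑ i, s i ≤ 1)
    (j : Fin k) : ∑ i, |softmaxJac s i j| ≤ 1 / 2 := by
  simpa [softmaxJac_symm s _ j] using jac_row_sum_le h0 h1 j

lemma mulVec_apply' {k l : ℕ} (B : Matrix (Fin k) (Fin l) ℝ) (v : Fin l → ℝ) (i : Fin k) :
    B.mulVec v i = ∑ j, B i j * v j := rfl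

lemma abs_mulVec_le {k l : ℕ} (B : Matrix (Fin k) (Fin l) ℝ) (v : Fin l → ℝ) (i : Fin k) :
    |B.mulVec v i| ≤ ∑ j, |B i j| * |v j| := by
  rw [mulVec_apply']
  exact (Finset.abs_sum_le_sum_abs _ _).trans (le_of_eq (by simp [abs_mul]))

lemma lpNorm_jac_mulVec_le {k : ℕ} (p : ℝ≥0∞) (hp : 1 ≤ p) {s : Fin k → ℝ}
    (h0 : ∀ i, 0 ≤ s i) (h1 : ∑ i, s i ≤ 1) (v : Fin k → ℝ) :
    lpNorm p ((softmaxJac s).mulVec v) ≤ (1 / 2) * lpNorm p v := by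
  rcases eq_or_ne p ⊤ with rfl | hptop
  · rw [lpNorm, if_pos rfl, lpNorm, if_pos rfl]
    have hM : 0 ≤ ⨆ j, |v j| := Real.iSup_nonneg fun j => abs_nonneg _
    refine Real.iSup_le (fun i => ?_) (by positivity)
    have hb : ∀ j, |v j| ≤ ⨆ j, |v j| := fun j =>
      le_ciSup (f := fun j => |v j|) (Set.Finite.bddAbove (Set.finite_range _)) j
    calc |((softmaxJac s).mulVec v) i| ≤ ∑ j, |softmaxJac s i j| * |v j| :=
          abs_mulVec_le _ _ _
      _ ≤ ∑ j, |softmaxJac s i j| * (⨆ j, |v j|) :=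
          Finset.sum_le_sum fun j _ => mul_le_mul_of_nonneg_left (hb j) (abs_nonneg _)
      _ = (∑ j, |softmaxJac s i j|) * (⨆ j, |v j|) := by rw [Finset.sum_mul]
      _ ≤ (1 / 2) * (⨆ j, |v j|) :=
          mul_le_mul_of_nonneg_right (jac_row_sum_le h0 h1 i) hM
  · have hr : 1 ≤ p.toReal := by
      have h := ENNReal.toReal_mono hptop hp
      simpa using h
    set r := p.toReal with hrdef
    have hr0 : 0 < r := lt_of_lt_of_le one_pos hr
    rw [lpNorm, if_neg hptop, lpNorm, if_neg hptop]
    have key : ∀ i, |((softmaxJac s).mulVec v) i| ^ r ≤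
        (1 / 2 : ℝ) ^ (r - 1) * ∑ j, |softmaxJac s i j| * |v j| ^ r := by
      intro i
      have hw : ∀ j, (0:ℝ) ≤ |softmaxJac s i j| := fun j => abs_nonneg _
      have hsumw : (0:ℝ) ≤ ∑ j, |softmaxJac s i j| := Finset.sum_nonneg fun j _ => hw j
      have hsumwf : (0:ℝ) ≤ ∑ j, |softmaxJac s i j| * |v j| ^ r :=
        Finset.sum_nonneg fun j _ => mul_nonneg (hw j) (Real.rpow_nonneg (abs_nonneg _) r)
      have h2 := Real.inner_le_weight_mul_Lp_of_nonneg Finset.univ hr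
        (fun j => |softmaxJac s i j|) (fun j => |v j|) hw (fun j => abs_nonneg _)
      calc |((softmaxJac s).mulVec v) i| ^ r
          ≤ (∑ j, |softmaxJac s i j| * |v j|) ^ r :=
            Real.rpow_le_rpow (abs_nonneg _) (abs_mulVec_le _ _ _) hr0.le
        _ ≤ ((∑ j, |softmaxJac s i j|) ^ (1 - r⁻¹) *
              (∑ j, |softmaxJac s i j| * |v j| ^ r) ^ r⁻¹) ^ r :=
            Real.rpow_le_rpow (Finset.sum_nonneg fun j _ =>
              mul_nonneg (hw j) (abs_nonneg _)) h2 hr0.le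
        _ = (∑ j, |softmaxJac s i j|) ^ ((1 - r⁻¹) * r) *
              (∑ j, |softmaxJac s i j| * |v j| ^ r) ^ (r⁻¹ * r) := by
            rw [Real.mul_rpow (Real.rpow_nonneg hsumw _) (Real.rpow_nonneg hsumwf _),
              ← Real.rpow_mul hsumw, ← Real.rpow_mul hsumwf]
        _ = (∑ j, |softmaxJac s i j|) ^ (r - 1) *
              (∑ j, |softmaxJac s i j| * |v j| ^ r) := by
            rw [inv_mul_cancel₀ hr0.ne', Real.rpow_one]
            congr 2
            field_simp
        _ ≤ (1 / 2 : ℝ) ^ (r - 1) * ∑ j, |softmaxJac s i j| * |v j| ^ r := by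
            apply mul_le_mul_of_nonneg_right _ hsumwf
            exact Real.rpow_le_rpow hsumw (jac_row_sum_le h0 h1 i) (by linarith)
    have hsum : ∑ i, |((softmaxJac s).mulVec v) i| ^ r ≤
        (1 / 2 : ℝ) ^ r * ∑ j, |v j| ^ r := by
      calc ∑ i, |((softmaxJac s).mulVec v) i| ^ r
          ≤ ∑ i, (1 / 2 : ℝ) ^ (r - 1) * ∑ j, |softmaxJac s i j| * |v j| ^ r :=
            Finset.sum_le_sum fun i _ => key i
        _ = (1 / 2 : ℝ) ^ (r - 1) * ∑ j, (∑ i, |softmaxJac s i j|) * |v j| ^ r := by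
            rw [← Finset.mul_sum, Finset.sum_comm]
            congr 1
            exact Finset.sum_congr rfl fun j _ => by rw [Finset.sum_mul]
        _ ≤ (1 / 2 : ℝ) ^ (r - 1) * ∑ j, (1 / 2) * |v j| ^ r := by
            apply mul_le_mul_of_nonneg_left _ (Real.rpow_nonneg (by norm_num) _)
            exact Finset.sum_le_sum fun j _ => mul_le_mul_of_nonneg_right
              (jac_col_sum_le h0 h1 j) (Real.rpow_nonneg (abs_nonneg _) r)
        _ = (1 / 2 : ℝ) ^ r * ∑ j, |v j| ^ r := by
            rw [← Finset.mul_sum, ← mul_assoc]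
            congr 1
            rw [← Real.rpow_add_one (by norm_num : (1/2:ℝ) ≠ 0) (r - 1)]
            norm_num
    have hfinal := Real.rpow_le_rpow (Finset.sum_nonneg fun i _ =>
      Real.rpow_nonneg (abs_nonneg _) r) hsum (by positivity : (0:ℝ) ≤ 1 / r)
    calc (∑ i, |((softmaxJac s).mulVec v) i| ^ r) ^ (1 / r)
        ≤ ((1 / 2 : ℝ) ^ r * ∑ j, |v j| ^ r) ^ (1 / r) := hfinal
      _ = (1 / 2) * (∑ j, |v j| ^ r) ^ (1 / r) := by
          rw [Real.mul_rpow (Real.rpow_nonneg (by norm_num) _)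
            (Finset.sum_nonneg fun j _ => Real.rpow_nonneg (abs_nonneg _) r),
            ← Real.rpow_mul (by norm_num : (0:ℝ) ≤ 1/2), mul_one_div, div_self hr0.ne',
            Real.rpow_one]

lemma softmax_nonneg {k : ℕ} (lam : ℝ) (x : Fin k → ℝ) (i : Fin k) : 0 ≤ softmax lam x i :=
  div_nonneg (Real.exp_pos _).le (Finset.sum_nonneg fun j _ => (Real.exp_pos _).le)

lemma softmax_sum_le {k : ℕ} (lam : ℝ) (x : Fin k → ℝ) : ∑ i, softmax lam x i ≤ 1 := by
  unfold softmax
  rw [← Finset.sum_div]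
  rcases eq_or_ne (∑ j, Real.exp (lam * x j)) 0 with h | h
  · simp [h]
  · rw [div_self h]

noncomputable def jacCLM {k : ℕ} (s : Fin k → ℝ) : (Fin k → ℝ) →L[ℝ] (Fin k → ℝ) :=
  LinearMap.toContinuousLinearMap (softmaxJac s).mulVecLin

lemma jacCLM_apply {k : ℕ} (s v : Fin k → ℝ) (i : Fin k) :
    jacCLM s v i = s i * v i - s i * ∑ j, s j * v j := by
  show ((softmaxJac s).mulVec v) i = _
  simp only [softmaxJac, Matrix.sub_mulVec, Pi.sub_apply, Matrix.mulVec_diagonal]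
  congr 1
  simp [Matrix.mulVec, dotProduct, Matrix.vecMulVec_apply, Finset.mul_sum, mul_assoc]

lemma hasFDerivAt_softmax {k : ℕ} (hk : k ≠ 0) (lam : ℝ) (x : Fin k → ℝ) :
    HasFDerivAt (softmax lam) (lam • jacCLM (softmax lam x)) x := by
  haveI : Nonempty (Fin k) := Fin.pos_iff_nonempty.mp (Nat.pos_of_ne_zero hk)
  have hS : 0 < ∑ j, Real.exp (lam * x j) :=
    Finset.sum_pos (fun j _ => Real.exp_pos _) Finset.univ_nonempty
  have hexp : ∀ i : Fin k, HasFDerivAt (fun z : Fin k → ℝ => Real.exp (lam * z i))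
      (Real.exp (lam * x i) • (lam • (ContinuousLinearMap.proj i : (Fin k → ℝ) →L[ℝ] ℝ))) x := by
    intro i
    have h1 : HasFDerivAt (fun z : Fin k → ℝ => z i)
        (ContinuousLinearMap.proj i : (Fin k → ℝ) →L[ℝ] ℝ) x :=
      (ContinuousLinearMap.proj i : (Fin k → ℝ) →L[ℝ] ℝ).hasFDerivAt
    exact ((h1.const_mul lam).exp)
  have hSder : HasFDerivAt (fun z : Fin k → ℝ => ∑ j, Real.exp (lam * z j))
      (∑ j, Real.exp (lam * x j) • (lam • (ContinuousLinearMap.proj j : (Fin k → ℝ) →L[ℝ] ℝ))) x :=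
    HasFDerivAt.fun_sum fun j _ => hexp j
  have hinv : HasFDerivAt (fun z : Fin k → ℝ => (∑ j, Real.exp (lam * z j))⁻¹)
      ((-((∑ j, Real.exp (lam * x j)) ^ 2)⁻¹) •
        (∑ j, Real.exp (lam * x j) • (lam • (ContinuousLinearMap.proj j : (Fin k → ℝ) →L[ℝ] ℝ)))) x :=
    (hasDerivAt_inv hS.ne').comp_hasFDerivAt x hSder
  have hcomp : ∀ i : Fin k, HasFDerivAt (fun z : Fin k → ℝ =>
      Real.exp (lam * z i) * (∑ j, Real.exp (lam * z j))⁻¹)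
      (Real.exp (lam * x i) • ((-((∑ j, Real.exp (lam * x j)) ^ 2)⁻¹) •
          (∑ j, Real.exp (lam * x j) • (lam • (ContinuousLinearMap.proj j : (Fin k → ℝ) →L[ℝ] ℝ)))) +
        (∑ j, Real.exp (lam * x j))⁻¹ •
          (Real.exp (lam * x i) • (lam • (ContinuousLinearMap.proj i : (Fin k → ℝ) →L[ℝ] ℝ)))) x :=
    fun i => (hexp i).mul hinv
  have hi : ∀ i : Fin k, HasFDerivAt (fun z : Fin k → ℝ => softmax lam z i)
      (Real.exp (lam * x i) • ((-((∑ j, Real.exp (lam * x j)) ^ 2)⁻¹) •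
          (∑ j, Real.exp (lam * x j) • (lam • (ContinuousLinearMap.proj j : (Fin k → ℝ) →L[ℝ] ℝ)))) +
        (∑ j, Real.exp (lam * x j))⁻¹ •
          (Real.exp (lam * x i) • (lam • (ContinuousLinearMap.proj i : (Fin k → ℝ) →L[ℝ] ℝ)))) x := by
    intro i
    have : (fun z : Fin k → ℝ => softmax lam z i) =
        fun z : Fin k → ℝ => Real.exp (lam * z i) * (∑ j, Real.exp (lam * z j))⁻¹ := by
      funext z; simp [softmax, div_eq_mul_inv]
    rw [this]
    exact hcomp i
  have := hasFDerivAt_pi.2 hi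
  refine this.congr_fderiv ?_
  apply ContinuousLinearMap.ext
  intro v
  funext i
  simp only [ContinuousLinearMap.smul_apply, ContinuousLinearMap.pi_apply,
    ContinuousLinearMap.add_apply, ContinuousLinearMap.sum_apply,
    ContinuousLinearMap.proj_apply, Pi.smul_apply, smul_eq_mul, jacCLM_apply, softmax]
  have hsum1 : ∑ j, Real.exp (lam * x j) / (∑ j, Real.exp (lam * x j)) * v j =
      (∑ j, Real.exp (lam * x j) * v j) / (∑ j, Real.exp (lam * x j)) := by
    rw [Finset.sum_div]
    exact Finset.sum_congr rfl fun j _ => by ring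
  have hsum2 : ∑ j, Real.exp (lam * x j) * (lam * v j) =
      lam * ∑ j, Real.exp (lam * x j) * v j := by
    rw [Finset.mul_sum]
    exact Finset.sum_congr rfl fun j _ => by ring
  rw [hsum1, hsum2]
  field_simp
  ring

lemma softmax_lipschitz {k : ℕ} (p : ℝ≥0∞) (hp : 1 ≤ p) {lam : ℝ} (hlam : 0 ≤ lam)
    (x y : Fin k → ℝ) :
    lpNorm p (softmax lam x - softmax lam y) ≤ (lam / 2) * lpNorm p (x - y) := by
  haveI : Fact (1 ≤ p) := ⟨hp⟩
  rcases Nat.eq_zero_or_pos k with rfl | hk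
  · have h0 : ∀ z : Fin 0 → ℝ, lpNorm p z = 0 := by
      intro z
      rw [lpNorm_eq_norm]
      have hz : (WithLp.equiv p (∀ _ : Fin 0, ℝ)).symm z = 0 := Subsingleton.elim _ _
      rw [hz, norm_zero]
    rw [h0, h0]
    have : (0:ℝ) ≤ lam / 2 := by positivity
    simp
  · have hk' : k ≠ 0 := hk.ne'
    set e := WithLp.equiv p (∀ _ : Fin k, ℝ) with he
    set E := PiLp.continuousLinearEquiv p ℝ (fun _ : Fin k => ℝ) with hE
    set F : PiLp p (fun _ : Fin k => ℝ) → PiLp p (fun _ : Fin k => ℝ) :=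
      fun z => e.symm (softmax lam (e z)) with hF
    set D : PiLp p (fun _ : Fin k => ℝ) → (PiLp p (fun _ : Fin k => ℝ) →L[ℝ] PiLp p (fun _ : Fin k => ℝ)) :=
      fun z => ((E.symm : (Fin k → ℝ) →L[ℝ] PiLp p (fun _ : Fin k => ℝ)).comp
        (lam • jacCLM (softmax lam (e z)))).comp (E : PiLp p (fun _ : Fin k => ℝ) →L[ℝ] (Fin k → ℝ)) with hD
    have hFderiv : ∀ z, HasFDerivAt F (D z) z := by
      intro z
      have h1 := (hasFDerivAt_softmax hk' lam (e z)).comp z E.hasFDerivAt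
      have h2 := (E.symm.hasFDerivAt).comp z h1
      exact h2
    have hbound : ∀ z, ‖D z‖ ≤ lam / 2 := by
      intro z
      refine ContinuousLinearMap.opNorm_le_bound _ (by positivity) fun w => ?_
      have happ : D z w = e.symm (lam • ((softmaxJac (softmax lam (e z))).mulVec (e w))) := rfl
      have hw : ‖w‖ = lpNorm p (e w) := by
        rw [lpNorm_eq_norm]
        congr 1
      rw [happ, ← lpNorm_eq_norm, hw, lpNorm_smul, abs_of_nonneg hlam]
      have := lpNorm_jac_mulVec_le p hp (softmax_nonneg lam (e z)) (softmax_sum_le lam (e z)) (e w)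
      calc lam * lpNorm p ((softmaxJac (softmax lam (e z))).mulVec (e w))
          ≤ lam * ((1/2) * lpNorm p (e w)) := mul_le_mul_of_nonneg_left this hlam
        _ = lam / 2 * lpNorm p (e w) := by ring
    have hmvt := Convex.norm_image_sub_le_of_norm_hasFDerivWithin_le (f := F) (f' := D)
      (s := Set.univ) (fun z _ => (hFderiv z).hasFDerivWithinAt)
      (fun z _ => hbound z) convex_univ (Set.mem_univ (e.symm y)) (Set.mem_univ (e.symm x))
    have hFx : F (e.symm x) = e.symm (softmax lam x) := by rw [hF]; congr 1
    have hFy : F (e.symm y) = e.symm (softmax lam y) := by rw [hF]; congr 1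
    rw [hFx, hFy] at hmvt
    rw [lpNorm_eq_norm, lpNorm_eq_norm]
    calc ‖(WithLp.equiv p (∀ _ : Fin k, ℝ)).symm (softmax lam x - softmax lam y)‖
        = ‖e.symm (softmax lam x) - e.symm (softmax lam y)‖ := by rw [he, WithLp.equiv_symm_apply, WithLp.toLp_sub]
      _ ≤ (lam / 2) * ‖e.symm x - e.symm y‖ := hmvt
      _ = (lam / 2) * ‖(WithLp.equiv p (∀ _ : Fin k, ℝ)).symm (x - y)‖ := by
          rw [he, WithLp.equiv_symm_apply, WithLp.toLp_sub]

/-- the double-softmax fixed-point map is Lipschitz with constant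
`‖Aᵀ‖_p ‖A‖_p / (4τ²)` in every ℓ_p norm; in particular with `‖A‖₂² / (4τ²)` in ℓ₂. -/
theorem dsfp_lipschitz {n m : ℕ} (A : Matrix (Fin n) (Fin m) ℝ) (τ : ℝ) (hτ : 0 < τ) :
    let T : (Fin m → ℝ) → (Fin m → ℝ) :=
      fun y => softmax (1 / τ) (Matrix.mulVec A.transpose (softmax (1 / τ) (-(A.mulVec y))))
    (∀ p : ℝ≥0∞, 1 ≤ p → ∀ y₁ y₂ : Fin m → ℝ,
      lpNorm p (T y₁ - T y₂) ≤
        (opNorm p A.transpose * opNorm p A / (4 * τ ^ 2)) * lpNorm p (y₁ - y₂)) ∧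
    (∀ y₁ y₂ : Fin m → ℝ,
      lpNorm 2 (T y₁ - T y₂) ≤
        (opNorm 2 A ^ 2 / (4 * τ ^ 2)) * lpNorm 2 (y₁ - y₂)) := by
  intro T
  have hT : ∀ y, T y = softmax (1 / τ)
      (Matrix.mulVec A.transpose (softmax (1 / τ) (-(A.mulVec y)))) := fun y => rfl
  have hlam : (0:ℝ) ≤ 1 / τ := by positivity
  have main : ∀ p : ℝ≥0∞, 1 ≤ p → ∀ y₁ y₂ : Fin m → ℝ,
      lpNorm p (T y₁ - T y₂) ≤
        (opNorm p A.transpose * opNorm p A / (4 * τ ^ 2)) * lpNorm p (y₁ - y₂) := by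
    intro p hp y₁ y₂
    haveI : Fact (1 ≤ p) := ⟨hp⟩
    set w₁ := softmax (1 / τ) (-(A.mulVec y₁)) with hw₁
    set w₂ := softmax (1 / τ) (-(A.mulVec y₂)) with hw₂
    have step1 : lpNorm p (T y₁ - T y₂) ≤
        (1 / τ / 2) * lpNorm p (A.transpose.mulVec w₁ - A.transpose.mulVec w₂) := by
      rw [hT, hT]
      exact softmax_lipschitz p hp hlam _ _
    have hsub : A.transpose.mulVec w₁ - A.transpose.mulVec w₂ =
        A.transpose.mulVec (w₁ - w₂) := (Matrix.mulVec_sub _ _ _).symm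
    have step2 : lpNorm p (A.transpose.mulVec (w₁ - w₂)) ≤
        opNorm p A.transpose * lpNorm p (w₁ - w₂) := lpNorm_mulVec_le p _ _
    have step3 : lpNorm p (w₁ - w₂) ≤
        (1 / τ / 2) * lpNorm p ((-(A.mulVec y₁)) - (-(A.mulVec y₂))) :=
      softmax_lipschitz p hp hlam _ _
    have hsub2 : (-(A.mulVec y₁)) - (-(A.mulVec y₂)) = A.mulVec (y₂ - y₁) := by
      rw [Matrix.mulVec_sub, neg_sub_neg]
    have step4 : lpNorm p (A.mulVec (y₂ - y₁)) ≤ opNorm p A * lpNorm p (y₂ - y₁) :=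
      lpNorm_mulVec_le p _ _
    have h5 : lpNorm p (y₂ - y₁) = lpNorm p (y₁ - y₂) := by rw [← neg_sub, lpNorm_neg]
    have hAt := opNorm_nonneg' p A.transpose
    have hA := opNorm_nonneg' p A
    have hhalf : (0:ℝ) ≤ 1 / τ / 2 := by positivity
    calc lpNorm p (T y₁ - T y₂)
        ≤ (1 / τ / 2) * lpNorm p (A.transpose.mulVec (w₁ - w₂)) := by rwa [hsub] at step1
      _ ≤ (1 / τ / 2) * (opNorm p A.transpose * lpNorm p (w₁ - w₂)) :=
          mul_le_mul_of_nonneg_left step2 hhalf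
      _ ≤ (1 / τ / 2) * (opNorm p A.transpose *
            ((1 / τ / 2) * lpNorm p (A.mulVec (y₂ - y₁)))) := by
          apply mul_le_mul_of_nonneg_left _ hhalf
          apply mul_le_mul_of_nonneg_left _ hAt
          rwa [hsub2] at step3
      _ ≤ (1 / τ / 2) * (opNorm p A.transpose *
            ((1 / τ / 2) * (opNorm p A * lpNorm p (y₂ - y₁)))) := by
          apply mul_le_mul_of_nonneg_left _ hhalf
          apply mul_le_mul_of_nonneg_left _ hAt
          exact mul_le_mul_of_nonneg_left step4 hhalf
      _ = (opNorm p A.transpose * opNorm p A / (4 * τ ^ 2)) * lpNorm p (y₁ - y₂) := by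
          rw [h5]
          field_simp
          ring
  refine ⟨main, fun y₁ y₂ => ?_⟩
  have h := main 2 one_le_two y₁ y₂
  rwa [opNorm_two_transpose, ← sq] at h
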